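/- Let $A$ be a commutative ring, $\Phi$ a $q\times p$ matrix over $A$ in block form $\begin{bmatrix}\alpha & \beta\\ \gamma & \delta\end{bmatrix}$ with $\alpha$ of size $r\times r$, and let $I$ be an ideal of $A$. If all entries of $(\det\alpha)\cdot\delta - \gamma\,\alpha^{\#}\beta$ lie in $I$, then all $(r+1)\times(r+1)$ minors of $(\det\alpha)\cdot\Phi$ lie in $I$. -/

import Mathlib

open Matrix

/-- det of a product of an (n+1)×n and an n×(n+1) matrix is zero. -/
theorem aux_det_mul_zero {R : Type*} [CommRing R] {n : ℕ}
    (P : Matrix (Fin (n + 1)) (Fin n) R) (Q : Matrix (Fin n) (Fin (n + 1)) R) :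
    (P * Q).det = 0 := by
  set P' : Matrix (Fin (n + 1)) (Fin (n + 1)) R :=
    Matrix.of fun i k => Fin.lastCases 0 (fun k' => P i k') k with hP'
  set Q' : Matrix (Fin (n + 1)) (Fin (n + 1)) R :=
    Matrix.of fun k j => Fin.lastCases 0 (fun k' => Q k' j) k with hQ'
  have key : P * Q = P' * Q' := by
    ext i j
    simp only [Matrix.mul_apply]
    rw [Fin.sum_univ_castSucc]
    simp [hP', hQ']
  rw [key, Matrix.det_mul]
  have : P'.det = 0 := by
    apply Matrix.det_eq_zero_of_column_eq_zero (Fin.last n)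
    intro i
    simp [hP']
  rw [this, zero_mul]

/-- Submatrix of a product. -/
theorem aux_submatrix_mul {R : Type*} [CommRing R] {m n p m' p' : Type*} [Fintype n]
    (M : Matrix m n R) (N : Matrix n p R) (r : m' → m) (c : p' → p) :
    (M * N).submatrix r c = M.submatrix r id * N.submatrix id c := by
  ext i j
  simp [Matrix.mul_apply]

/-- If all entries of `(det α)·δ - γ·α#·β` lie in an ideal `I`, then all
`(r+1) × (r+1)` minors of `(det α)·Φ` lie in `I`, where `Φ = [[α,β],[γ,δ]]`. -/
theorem stmt5 {A : Type*} [CommRing A] {r s t : ℕ} (I : Ideal A)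
    (α : Matrix (Fin r) (Fin r) A) (β : Matrix (Fin r) (Fin t) A)
    (γ : Matrix (Fin s) (Fin r) A) (δ : Matrix (Fin s) (Fin t) A)
    (h : ∀ i j, (α.det • δ - γ * α.adjugate * β) i j ∈ I) :
    ∀ (rows : Fin (r + 1) → Fin r ⊕ Fin s) (cols : Fin (r + 1) → Fin r ⊕ Fin t),
      ((α.det • fromBlocks α β γ δ).submatrix rows cols).det ∈ I := by
  intro rows cols
  set f := Ideal.Quotient.mk I with hf
  rw [← Ideal.Quotient.eq_zero_iff_mem, RingHom.map_det]
  -- factorization over A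
  have fact : α.det • fromBlocks α β γ δ =
      (fromBlocks α 0 γ 1 : Matrix (Fin r ⊕ Fin s) (Fin r ⊕ Fin s) A) *
        fromBlocks (α.det • (1 : Matrix (Fin r) (Fin r) A)) (α.adjugate * β) 0
          (α.det • δ - γ * α.adjugate * β) := by
    rw [Matrix.fromBlocks_multiply, Matrix.fromBlocks_smul]
    congr 1 <;> simp [Matrix.mul_smul, Matrix.mul_adjugate, Matrix.smul_mul, ← Matrix.mul_assoc]
  -- map to quotient
  have hmap : ((α.det • fromBlocks α β γ δ).map f) =
      (fromBlocks α (0 : Matrix (Fin r) (Fin s) A) γ (1 : Matrix (Fin s) (Fin s) A)).map f *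
        (fromBlocks (α.det • (1 : Matrix (Fin r) (Fin r) A)) (α.adjugate * β)
          (0 : Matrix (Fin s) (Fin r) A) (0 : Matrix (Fin s) (Fin t) A)).map f := by
    rw [fact, Matrix.map_mul]
    congr 1
    ext i j
    cases i with
    | inl i => cases j <;> simp [Matrix.fromBlocks]
    | inr i =>
      cases j with
      | inl j => simp [Matrix.fromBlocks]
      | inr j =>
        simp only [Matrix.fromBlocks, Matrix.map_apply, Matrix.of_apply, Sum.elim_inr,
          Matrix.zero_apply, map_zero]
        exact Ideal.Quotient.eq_zero_iff_mem.mpr (h i j)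
  -- the second factor has zero bottom rows: factor through Fin r
  set E : Matrix (Fin r ⊕ Fin s) (Fin r) (A ⧸ I) :=
    Matrix.of (Sum.elim (fun i k => (1 : Matrix (Fin r) (Fin r) (A ⧸ I)) i k) fun _ _ => 0)
    with hE
  set F : Matrix (Fin r) (Fin r ⊕ Fin t) (A ⧸ I) :=
    Matrix.of (fun k => Sum.elim (fun j => f ((α.det • (1 : Matrix (Fin r) (Fin r) A)) k j))
      fun j => f ((α.adjugate * β) k j)) with hF
  have hEF : (fromBlocks (α.det • (1 : Matrix (Fin r) (Fin r) A)) (α.adjugate * β) 0 0).map f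
      = E * F := by
    ext i j
    cases i with
    | inl i =>
      have : (E * F) (Sum.inl i) j = F i j := by
        simp only [Matrix.mul_apply, hE, Matrix.of_apply, Sum.elim_inl]
        rw [Finset.sum_eq_single i] <;> simp +contextual [Matrix.one_apply, eq_comm]
      rw [this]
      cases j <;> simp [hF, Matrix.fromBlocks]
    | inr i =>
      have : (E * F) (Sum.inr i) j = 0 := by
        simp [Matrix.mul_apply, hE]
      rw [this]
      cases j <;> simp [Matrix.fromBlocks]
  rw [show ((Ideal.Quotient.mk I).mapMatrix ((α.det • fromBlocks α β γ δ).submatrix rows cols) :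
        Matrix _ _ (A ⧸ I)) = ((α.det • fromBlocks α β γ δ).map f).submatrix rows cols from
      (Matrix.submatrix_map (⇑f) rows cols _).symm,
    hmap, hEF, ← Matrix.mul_assoc, aux_submatrix_mul]
  exact aux_det_mul_zero _ _
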